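/- Let R be a commutative ring and S, T ∈ Um_{m,n}(R) right invertible m×n matrices of the form S = (Y', β') and T = (Z', β') in the first m−1 rows, where the m-th row of S is (a₁,…,a_{m−1}, a_m,…,a_n) and the m-th row of T is (−a₁,…,−a_{m−1}, b_m,…,b_n). Then the row (a_m·b_m, a_{m+1},…,a_n, b_{m+1},…,b_n, a₁,…,a_{m−1}) of length 2(n−m)+m is unimodular over R. -/
import Mathlib


/-- A row `v` of length `n` over a commutative ring is *unimodular* if there is a row `w`
with `∑ i, v i * w i = 1`. -/
def IsUnimodular {R : Type*} [CommRing R] {n : ℕ} (v : Fin n → R) : Prop :=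
  ∃ w : Fin n → R, ∑ i, v i * w i = 1

/-- `ε` lies in the elementary group `E_n(R)`, i.e. the (sub)group of `GL_n(R)` generated by
the elementary matrices `e_{ij}(λ) = I + λ E_{ij}` (`i ≠ j`).  Since the generating set is
closed under inverses, this coincides with the multiplicative closure. -/
def IsElementary {R : Type*} [CommRing R] {n : ℕ} (ε : Matrix (Fin n) (Fin n) R) : Prop :=
  ε ∈ Submonoid.closure {M : Matrix (Fin n) (Fin n) R |
    ∃ (i j : Fin n) (c : R), i ≠ j ∧ M = Matrix.transvection i j c}

/-- An `m × n` matrix is right invertible (i.e. lies in `Um_{m,n}(R)`) if it has a right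
inverse. -/
def RightInvertible {R : Type*} [CommRing R] {m n : ℕ} (A : Matrix (Fin m) (Fin n) R) : Prop :=
  ∃ B : Matrix (Fin n) (Fin m) R, A * B = 1

/-- The stable range condition `sr_k(R)`. -/
def SRCond (R : Type*) [CommRing R] (k : ℕ) : Prop :=
  ∀ a : Fin (k + 1) → R, IsUnimodular a →
    ∃ c : Fin k → R, IsUnimodular (fun i : Fin k => a i.castSucc + c i * a (Fin.last k))

/-- Let `R` be a commutative ring and `S, T ∈ Um_{m,n}(R)` (`m = p + 1`, `n = p + (k + 1)`)
right invertible matrices whose first `m − 1` rows have the shapes `(Y', β')` and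
`(Z', β')` (same `β'` in the last `n − (m−1)` columns), and whose `m`-th rows are
`(a₁,…,a_{m−1}, a_m,…,a_n)` and `(−a₁,…,−a_{m−1}, b_m,…,b_n)` respectively.  Then the row
`(a_m b_m, a_{m+1},…,a_n, b_{m+1},…,b_n, a₁,…,a_{m−1})` of length `2(n−m) + m` is
unimodular. -/
theorem unimodular_row_from_last_rows {R : Type*} [CommRing R]
    (p k : ℕ) (S T : Matrix (Fin (p + 1)) (Fin (p + (k + 1))) R)
    (hS : RightInvertible S) (hT : RightInvertible T)
    (a1 : Fin p → R) (am : R) (atail : Fin k → R) (bm : R) (btail : Fin k → R)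
    (hβ : ∀ (i : Fin p) (j : Fin (k + 1)),
      S i.castSucc (Fin.natAdd p j) = T i.castSucc (Fin.natAdd p j))
    (hSrow : S (Fin.last p) = Fin.append a1 (Fin.cons am atail))
    (hTrow : T (Fin.last p) = Fin.append (fun i => -a1 i) (Fin.cons bm btail)) :
    IsUnimodular (Fin.cons (am * bm) (Fin.append (Fin.append atail btail) a1)) := by

  obtain ⟨B, hB⟩ := hS
  obtain ⟨C, hC⟩ := hT
  have hB1 : ∑ j, S (Fin.last p) j * B j (Fin.last p) = 1 := by
    have := congrFun (congrFun hB (Fin.last p)) (Fin.last p)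
    simpa [Matrix.mul_apply, Matrix.one_apply] using this
  have hC1 : ∑ j, T (Fin.last p) j * C j (Fin.last p) = 1 := by
    have := congrFun (congrFun hC (Fin.last p)) (Fin.last p)
    simpa [Matrix.mul_apply, Matrix.one_apply] using this
  rw [hSrow] at hB1
  rw [hTrow] at hC1
  set U := B (Fin.natAdd p 0) (Fin.last p) with hU
  set V := C (Fin.natAdd p 0) (Fin.last p) with hV
  rw [Fin.sum_univ_add] at hB1 hC1
  simp only [Fin.append_left, Fin.append_right] at hB1 hC1
  rw [Fin.sum_univ_succ] at hB1 hC1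
  simp only [Fin.cons_zero, Fin.cons_succ] at hB1 hC1
  refine ⟨Fin.cons (U * V)
    (Fin.append (Fin.append
      (fun j => B (Fin.natAdd p j.succ) (Fin.last p))
      (fun j => am * U * C (Fin.natAdd p j.succ) (Fin.last p)))
      (fun i => B (Fin.castAdd (k + 1) i) (Fin.last p)
        - am * U * C (Fin.castAdd (k + 1) i) (Fin.last p))), ?_⟩
  rw [Fin.sum_univ_succ]
  simp only [Fin.cons_zero, Fin.cons_succ]
  rw [Fin.sum_univ_add]
  simp only [Fin.append_left, Fin.append_right]
  rw [Fin.sum_univ_add]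
  simp only [Fin.append_left, Fin.append_right]
  have e1 : ∑ x : Fin k, btail x * (am * U * C (Fin.natAdd p x.succ) (Fin.last p))
      = am * U * ∑ x : Fin k, btail x * C (Fin.natAdd p x.succ) (Fin.last p) := by
    rw [Finset.mul_sum]; exact Finset.sum_congr rfl fun x _ => by ring
  have e2 : ∑ x : Fin p, a1 x * (B (Fin.castAdd (k + 1) x) (Fin.last p)
        - am * U * C (Fin.castAdd (k + 1) x) (Fin.last p))
      = (∑ x : Fin p, a1 x * B (Fin.castAdd (k + 1) x) (Fin.last p))
        - am * U * ∑ x : Fin p, a1 x * C (Fin.castAdd (k + 1) x) (Fin.last p) := by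
    rw [Finset.mul_sum, ← Finset.sum_sub_distrib]
    exact Finset.sum_congr rfl fun x _ => by ring
  have e3 : ∑ x : Fin p, -a1 x * C (Fin.castAdd (k + 1) x) (Fin.last p)
      = -∑ x : Fin p, a1 x * C (Fin.castAdd (k + 1) x) (Fin.last p) := by
    rw [← Finset.sum_neg_distrib]
    exact Finset.sum_congr rfl fun x _ => by ring
  rw [e3] at hC1
  rw [e1, e2]
  linear_combination hB1 + (am * U) * hC1
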